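/- For 0 < q < 1 and 0 < α ≤ 1, the series ∑_{k=1}^∞ t^{kα}/Γ_q(kα+1) converges for 0 < t ≤ 1; in particular, the ratio Γ_q((k−1)α+1)/Γ_q(kα+1) tends to (1−q)^α < 1 as k → ∞. -/

import Mathlib

set_option maxHeartbeats 1000000

noncomputable section

open Real Filter Topology

/-- q-factorial function (t-s)_q^α for real exponent α. -/
def qFact (q t s α : ℝ) : ℝ :=
  t ^ α * ∏' i : ℕ, (1 - s / t * q ^ (i : ℝ)) / (1 - s / t * q ^ ((i : ℝ) + α))

/-- q-gamma function Γ_q(α) = (1-q)_q^{α-1} (1-q)^{1-α}. -/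
def qGamma (q α : ℝ) : ℝ :=
  (∏' i : ℕ, (1 - q ^ ((i : ℝ) + 1)) / (1 - q ^ ((i : ℝ) + α))) * (1 - q) ^ (1 - α)

/-- nabla q-integral from 0 to t. -/
def qInt (q : ℝ) (f : ℝ → ℝ) (t : ℝ) : ℝ :=
  (1 - q) * t * ∑' i : ℕ, q ^ i * f (t * q ^ i)

/-- nabla q-integral from a to t. -/
def qIntI (q : ℝ) (f : ℝ → ℝ) (a t : ℝ) : ℝ := qInt q f t - qInt q f a

/-- nabla q-derivative. -/
def qDeriv (q : ℝ) (f : ℝ → ℝ) (t : ℝ) : ℝ := (f t - f (q * t)) / ((1 - q) * t)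

/-- left q-fractional integral of order α starting at a. -/
def qFracInt (q α a : ℝ) (f : ℝ → ℝ) (t : ℝ) : ℝ :=
  (1 / qGamma q α) * qIntI q (fun s => qFact q t (q * s) (α - 1) * f s) a t

/-- Caputo left q-fractional derivative of order 0 < α ≤ 1. -/
def qCaputo (q α a : ℝ) (f : ℝ → ℝ) (t : ℝ) : ℝ :=
  qFracInt q (1 - α) a (qDeriv q f) t

/-- q-Mittag-Leffler function E_{α,β}(λ, z - z₀). -/
def qML (q α β lam z z₀ : ℝ) : ℝ :=
  ∑' k : ℕ, lam ^ k * qFact q z z₀ (α * k) / qGamma q (α * k + β)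

/-- the operator Ω_x φ = ∇_a^{-α}(x·φ). -/
def qOmega (q α a : ℝ) (x : ℝ → ℝ) (φ : ℝ → ℝ) : ℝ → ℝ :=
  qFracInt q α a (fun s => x s * φ s)

/-- Λ_a = {a, a/q, a/q², …}. -/
def qLambda (q a : ℝ) : Set ℝ := {t | ∃ n : ℕ, t = a / q ^ n}

/-- q-factorial function with natural exponent. -/
def qFactN (q t a : ℝ) (k : ℕ) : ℝ := ∏ i ∈ Finset.range k, (t - q ^ i * a)

/-- auxiliary: the log-sum B(β) = ∑ log(1 - q^(i+β)). -/
def qB (q β : ℝ) : ℝ := ∑' i : ℕ, Real.log (1 - q ^ ((i : ℝ) + β))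

namespace qMLaux

variable {q : ℝ}

lemma rpow_fact (hq0 : 0 < q) (β : ℝ) (i : ℕ) :
    q ^ ((i : ℝ) + β) = q ^ i * q ^ β := by
  rw [Real.rpow_add hq0, Real.rpow_natCast]

lemma fact_pos (hq0 : 0 < q) (hq1 : q < 1) {β : ℝ} (hβ : 1 ≤ β) (i : ℕ) :
    q ^ i * q ^ β ≤ q ∧ 0 < 1 - q ^ ((i : ℝ) + β) ∧ q ^ ((i : ℝ) + β) ≤ 1 := by
  have hβpos : (0:ℝ) < β := lt_of_lt_of_le one_pos hβ
  have h1 : q ^ β ≤ q := by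
    calc q ^ β ≤ q ^ (1:ℝ) := Real.rpow_le_rpow_of_exponent_ge hq0 hq1.le hβ
    _ = q := Real.rpow_one q
  have h2 : q ^ i * q ^ β ≤ q := by
    calc q ^ i * q ^ β ≤ 1 * q := by
          apply mul_le_mul (pow_le_one₀ hq0.le hq1.le) h1
            (Real.rpow_pos_of_pos hq0 β).le zero_le_one
    _ = q := one_mul q
  refine ⟨h2, ?_, ?_⟩
  · rw [rpow_fact hq0]; linarith
  · rw [rpow_fact hq0]; linarith

lemma neg_log_le (hq0 : 0 < q) (hq1 : q < 1) {β : ℝ} (hβ : 1 ≤ β) (i : ℕ) :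
    -Real.log (1 - q ^ ((i : ℝ) + β)) ≤ q ^ β / (1 - q) * q ^ i := by
  obtain ⟨h2, h3, h4⟩ := fact_pos hq0 hq1 hβ i
  set x := q ^ ((i : ℝ) + β) with hx
  have hxq : x ≤ q := by rw [hx, rpow_fact hq0]; exact h2
  have hxpos : 0 < x := Real.rpow_pos_of_pos hq0 _
  have h1q : 0 < 1 - q := by linarith
  have hlog : Real.log ((1 - x)⁻¹) ≤ (1 - x)⁻¹ - 1 :=
    Real.log_le_sub_one_of_pos (inv_pos.2 h3)
  rw [Real.log_inv] at hlog
  have hineq : (1 - x)⁻¹ - 1 = x / (1 - x) := by field_simp; ring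
  have hbound : x / (1 - x) ≤ x / (1 - q) :=
    div_le_div_of_nonneg_left hxpos.le h1q (by linarith)
  have hlast : x / (1 - q) ≤ q ^ β / (1 - q) * q ^ i := by
    rw [hx, rpow_fact hq0]
    rw [div_mul_eq_mul_div, mul_comm (q ^ β)]
  linarith

lemma log_nonpos' (hq0 : 0 < q) (hq1 : q < 1) {β : ℝ} (hβ : 1 ≤ β) (i : ℕ) :
    Real.log (1 - q ^ ((i : ℝ) + β)) ≤ 0 := by
  obtain ⟨_, h3, _⟩ := fact_pos hq0 hq1 hβ i
  have : q ^ ((i : ℝ) + β) ≥ 0 := (Real.rpow_pos_of_pos hq0 _).le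
  exact Real.log_nonpos (by linarith) (by linarith)

lemma summable_log (hq0 : 0 < q) (hq1 : q < 1) {β : ℝ} (hβ : 1 ≤ β) :
    Summable fun i : ℕ => Real.log (1 - q ^ ((i : ℝ) + β)) := by
  apply Summable.of_norm
  refine Summable.of_nonneg_of_le (f := fun i : ℕ => q ^ β / (1 - q) * q ^ i)
    (fun i => norm_nonneg _) ?_ ?_
  · intro i
    rw [Real.norm_eq_abs, abs_of_nonpos (log_nonpos' hq0 hq1 hβ i)]
    exact neg_log_le hq0 hq1 hβ i
  · exact (summable_geometric_of_lt_one hq0.le hq1).mul_left _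

lemma qB_nonpos (hq0 : 0 < q) (hq1 : q < 1) {β : ℝ} (hβ : 1 ≤ β) : qB q β ≤ 0 :=
  tsum_nonpos (log_nonpos' hq0 hq1 hβ)

lemma qB_lower (hq0 : 0 < q) (hq1 : q < 1) {β : ℝ} (hβ : 1 ≤ β) :
    -(q ^ β / (1 - q) * (1 - q)⁻¹) ≤ qB q β := by
  have h : -qB q β ≤ q ^ β / (1 - q) * (1 - q)⁻¹ := by
    rw [qB, ← tsum_neg]
    calc ∑' i : ℕ, -Real.log (1 - q ^ ((i : ℝ) + β))
        ≤ ∑' i : ℕ, q ^ β / (1 - q) * q ^ i := by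
          apply Summable.tsum_le_tsum (neg_log_le hq0 hq1 hβ)
            (summable_log hq0 hq1 hβ).neg
            ((summable_geometric_of_lt_one hq0.le hq1).mul_left _)
    _ = q ^ β / (1 - q) * (1 - q)⁻¹ := by
          rw [tsum_mul_left, tsum_geometric_of_lt_one hq0.le hq1]
  linarith

lemma qGamma_eq (hq0 : 0 < q) (hq1 : q < 1) {β : ℝ} (hβ : 1 ≤ β) :
    qGamma q β = Real.exp (qB q 1 - qB q β) * (1 - q) ^ (1 - β) := by
  rw [qGamma]
  congr 1
  have hs : HasSum
      (fun i : ℕ => Real.log (1 - q ^ ((i : ℝ) + 1)) - Real.log (1 - q ^ ((i : ℝ) + β)))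
      (qB q 1 - qB q β) :=
    (summable_log hq0 hq1 le_rfl).hasSum.sub (summable_log hq0 hq1 hβ).hasSum
  have hp := hs.rexp
  have hfun : (Real.exp ∘ fun i : ℕ =>
      Real.log (1 - q ^ ((i : ℝ) + 1)) - Real.log (1 - q ^ ((i : ℝ) + β)))
      = fun i : ℕ => (1 - q ^ ((i : ℝ) + 1)) / (1 - q ^ ((i : ℝ) + β)) := by
    funext i
    have h1 := (fact_pos hq0 hq1 le_rfl i).2.1
    have h2 := (fact_pos hq0 hq1 hβ i).2.1
    simp only [Function.comp_apply, Real.exp_sub, Real.exp_log h1, Real.exp_log h2]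
  rw [hfun] at hp
  exact hp.tprod_eq

lemma qGamma_pos (hq0 : 0 < q) (hq1 : q < 1) {β : ℝ} (hβ : 1 ≤ β) : 0 < qGamma q β := by
  rw [qGamma_eq hq0 hq1 hβ]
  exact mul_pos (Real.exp_pos _) (Real.rpow_pos_of_pos (by linarith) _)

lemma qB_tendsto (hq0 : 0 < q) (hq1 : q < 1) {α : ℝ} (hα0 : 0 < α) (c : ℝ)
    (hc : ∀ᶠ k : ℕ in atTop, 1 ≤ (k : ℝ) * α + c) :
    Tendsto (fun k : ℕ => qB q ((k : ℝ) * α + c)) atTop (𝓝 0) := by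
  have h1q : 0 < 1 - q := by linarith
  have hqα : q ^ α < 1 := Real.rpow_lt_one hq0.le hq1 hα0
  have hlow : Tendsto (fun k : ℕ =>
      -((q ^ α) ^ k * (q ^ c / (1 - q) * (1 - q)⁻¹))) atTop (𝓝 0) := by
    have := (tendsto_pow_atTop_nhds_zero_of_lt_one
      (Real.rpow_nonneg hq0.le α) hqα).mul_const (q ^ c / (1 - q) * (1 - q)⁻¹)
    simpa using this.neg
  apply tendsto_of_tendsto_of_tendsto_of_le_of_le' hlow tendsto_const_nhds
  · filter_upwards [hc] with k hk
    have heq : q ^ ((k : ℝ) * α + c) = (q ^ α) ^ k * q ^ c := by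
      rw [Real.rpow_add hq0, mul_comm (k : ℝ) α, Real.rpow_mul hq0.le,
        Real.rpow_natCast]
    have := qB_lower hq0 hq1 hk
    rw [heq] at this
    calc -((q ^ α) ^ k * (q ^ c / (1 - q) * (1 - q)⁻¹))
        = -((q ^ α) ^ k * q ^ c / (1 - q) * (1 - q)⁻¹) := by ring
    _ ≤ qB q ((k : ℝ) * α + c) := this
  · filter_upwards [hc] with k hk
    exact qB_nonpos hq0 hq1 hk

end qMLaux

theorem qML_series_convergence (q α : ℝ) (hq0 : 0 < q) (hq1 : q < 1)
    (hα0 : 0 < α) (hα1 : α ≤ 1) :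
    (∀ t : ℝ, 0 < t → t ≤ 1 →
      Summable fun k : ℕ => t ^ ((k : ℝ) * α) / qGamma q ((k : ℝ) * α + 1)) ∧
    Tendsto (fun k : ℕ => qGamma q (((k : ℝ) - 1) * α + 1) / qGamma q ((k : ℝ) * α + 1))
      atTop (𝓝 ((1 - q) ^ α)) ∧
    (1 - q) ^ α < 1 := by
  have h1q : 0 < 1 - q := by linarith
  have h1q1 : 1 - q < 1 := by linarith
  have hlt1 : (1 - q) ^ α < 1 := Real.rpow_lt_one h1q.le h1q1 hα0
  refine ⟨?_, ?_, hlt1⟩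
  · -- summability
    intro t ht0 ht1
    have hβ : ∀ k : ℕ, (1:ℝ) ≤ (k : ℝ) * α + 1 := by
      intro k
      have : (0:ℝ) ≤ (k : ℝ) * α := mul_nonneg (Nat.cast_nonneg k) hα0.le
      linarith
    refine Summable.of_nonneg_of_le
      (f := fun k : ℕ => Real.exp (-(qB q 1)) * ((1 - q) ^ α) ^ k) ?_ ?_ ?_
    · intro k
      exact div_nonneg (Real.rpow_nonneg ht0.le _)
        (qMLaux.qGamma_pos hq0 hq1 (hβ k)).le
    · intro k
      have hG := qMLaux.qGamma_eq hq0 hq1 (hβ k)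
      have hGpos := qMLaux.qGamma_pos hq0 hq1 (hβ k)
      have hrw : (1:ℝ) / qGamma q ((k : ℝ) * α + 1)
          = Real.exp (qB q ((k : ℝ) * α + 1) - qB q 1) * ((1 - q) ^ α) ^ k := by
        rw [hG, show (1:ℝ) - ((k : ℝ) * α + 1) = -((k : ℝ) * α) by ring,
          Real.rpow_neg h1q.le, one_div, mul_inv, inv_inv, ← Real.exp_neg, neg_sub,
          mul_comm (k : ℝ) α, Real.rpow_mul h1q.le, Real.rpow_natCast]
      calc t ^ ((k : ℝ) * α) / qGamma q ((k : ℝ) * α + 1)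
          ≤ 1 / qGamma q ((k : ℝ) * α + 1) := by
            gcongr
            · exact Real.rpow_le_one ht0.le ht1
                (mul_nonneg (Nat.cast_nonneg k) hα0.le)
      _ = Real.exp (qB q ((k : ℝ) * α + 1) - qB q 1) * ((1 - q) ^ α) ^ k := hrw
      _ ≤ Real.exp (-(qB q 1)) * ((1 - q) ^ α) ^ k := by
            apply mul_le_mul_of_nonneg_right _
              (pow_nonneg (Real.rpow_nonneg h1q.le α) k)
            apply Real.exp_le_exp.2
            have := qMLaux.qB_nonpos hq0 hq1 (hβ k)
            linarith
    · exact (summable_geometric_of_lt_one (Real.rpow_nonneg h1q.le α) hlt1).mul_left _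
  · -- the limit
    have hc1 : ∀ᶠ k : ℕ in atTop, (1:ℝ) ≤ (k : ℝ) * α + 1 := by
      filter_upwards with k
      have : (0:ℝ) ≤ (k : ℝ) * α := mul_nonneg (Nat.cast_nonneg k) hα0.le
      linarith
    have hc2 : ∀ᶠ k : ℕ in atTop, (1:ℝ) ≤ (k : ℝ) * α + (1 - α) := by
      filter_upwards [Filter.eventually_ge_atTop 1] with k hk
      have h1k : (1:ℝ) ≤ (k:ℝ) := by exact_mod_cast hk
      nlinarith
    have hB1 := qMLaux.qB_tendsto hq0 hq1 hα0 1 hc1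
    have hB2 := qMLaux.qB_tendsto hq0 hq1 hα0 (1 - α) hc2
    have hF : Tendsto (fun k : ℕ =>
        Real.exp (qB q ((k : ℝ) * α + 1) - qB q ((k : ℝ) * α + (1 - α)))
          * (1 - q) ^ α) atTop (𝓝 ((1 - q) ^ α)) := by
      have := ((hB1.sub hB2).rexp).mul_const ((1 - q) ^ α)
      simpa using this
    apply hF.congr'
    filter_upwards [Filter.eventually_ge_atTop 1, hc1, hc2] with k hk hk1 hk2
    have ha : ((k : ℝ) - 1) * α + 1 = (k : ℝ) * α + (1 - α) := by ring
    rw [ha, qMLaux.qGamma_eq hq0 hq1 hk2, qMLaux.qGamma_eq hq0 hq1 hk1,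
      ← div_mul_div_comm, ← Real.exp_sub, ← Real.rpow_sub h1q,
      show (1 - ((k : ℝ) * α + (1 - α))) - (1 - ((k : ℝ) * α + 1)) = α by ring,
      show qB q 1 - qB q ((k : ℝ) * α + (1 - α)) - (qB q 1 - qB q ((k : ℝ) * α + 1))
        = qB q ((k : ℝ) * α + 1) - qB q ((k : ℝ) * α + (1 - α)) by ring]
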